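/- Let P be the transition matrix of a reversible, irreducible and aperiodic Markov chain on a finite state space S with stationary distribution π (so π(y) > 0 for all y). Fix a state x0 and let η be an ℕ-valued random variable (an optimal strong stationary time for the chain started at x0) satisfying P(η > t) = s_{x0}(t) for every t ∈ ℕ. Then for every ℓ ∈ ℕ, P(η > ℓ·t_mix) ≤ 4·2^{−⌊ℓ/2⌋}. -/

import Mathlib

open MeasureTheory Finset
set_option linter.unusedSectionVars false
set_option linter.unusedVariables false

open Finset

section aux
variable {S : Type*} [Fintype S] [DecidableEq S] [Nonempty S]
variable {P : Matrix S S ℝ} {π : S → ℝ}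

lemma powNonneg (hP : ∀ x y, 0 ≤ P x y) (n : ℕ) : ∀ x y, 0 ≤ (P ^ n) x y := by
  induction n with
  | zero => intro x y; simp [Matrix.one_apply]; positivity
  | succ n ih =>
    intro x y
    rw [pow_succ, Matrix.mul_apply]
    exact Finset.sum_nonneg fun z _ => mul_nonneg (ih x z) (hP z y)

lemma powRow (hP : ∀ x, ∑ y : S, P x y = 1) (n : ℕ) : ∀ x, ∑ y : S, (P ^ n) x y = 1 := by
  induction n with
  | zero => intro x; simp [Matrix.one_apply]
  | succ n ih =>
    intro x
    simp only [pow_succ, Matrix.mul_apply]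
    rw [Finset.sum_comm]
    simp_rw [← Finset.mul_sum, hP]
    simpa using ih x

lemma powStat (hstat : ∀ y, ∑ x : S, π x * P x y = π y) (n : ℕ) :
    ∀ y, ∑ x : S, π x * (P ^ n) x y = π y := by
  induction n with
  | zero => intro y; simp [Matrix.one_apply]
  | succ n ih =>
    intro y
    simp only [pow_succ, Matrix.mul_apply, Finset.mul_sum]
    rw [Finset.sum_comm]
    simp_rw [← mul_assoc, ← Finset.sum_mul, ih]
    exact hstat y

lemma powRev (hrev : ∀ x y, π x * P x y = π y * P y x) (n : ℕ) :
    ∀ x y, π x * (P ^ n) x y = π y * (P ^ n) y x := by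
  induction n with
  | zero =>
    intro x y
    by_cases h : x = y
    · subst h; rfl
    · simp [Matrix.one_apply, h, Ne.symm h]
  | succ n ih =>
    intro x y
    conv_lhs => rw [pow_succ]
    conv_rhs => rw [pow_succ']
    rw [Matrix.mul_apply, Matrix.mul_apply, Finset.mul_sum, Finset.mul_sum]
    apply Finset.sum_congr rfl
    intro z _
    calc π x * ((P ^ n) x z * P z y) = (π x * (P ^ n) x z) * P z y := by ring
      _ = (π z * (P ^ n) z x) * P z y := by rw [ih]
      _ = (π z * P z y) * (P ^ n) z x := by ring
      _ = (π y * P y z) * (P ^ n) z x := by rw [hrev]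
      _ = π y * (P y z * (P ^ n) z x) := by ring

lemma one_apply_ne' {x y : S} (h : x = y → False) : (1 : Matrix S S ℝ) x y = 0 := Matrix.one_apply_ne h
end aux


noncomputable def Dmat {S : Type*} [Fintype S] [DecidableEq S] (P : Matrix S S ℝ) (t : ℕ) : ℝ :=
  ⨆ p : S × S, ∑ y : S, |(P ^ t) p.1 y - (P ^ t) p.2 y|

section aux2
variable {S : Type*} [Fintype S] [DecidableEq S] [Nonempty S]
variable {P : Matrix S S ℝ} {π : S → ℝ}

lemma le_Dmat (t : ℕ) (x x' : S) :
    ∑ y : S, |(P ^ t) x y - (P ^ t) x' y| ≤ Dmat P t := by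
  unfold Dmat
  exact le_ciSup (f := fun p : S × S => ∑ y : S, |(P ^ t) p.1 y - (P ^ t) p.2 y|)
    (Set.Finite.bddAbove (Set.finite_range _)) (x, x')

lemma Dmat_le {t : ℕ} {c : ℝ} (h : ∀ x x' : S, ∑ y : S, |(P ^ t) x y - (P ^ t) x' y| ≤ c) :
    Dmat P t ≤ c := by
  unfold Dmat
  exact ciSup_le fun p => h p.1 p.2

lemma Dmat_nonneg (t : ℕ) : 0 ≤ Dmat P t := by
  obtain ⟨x⟩ := ‹Nonempty S›
  refine le_trans ?_ (le_Dmat t x x)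
  positivity

lemma Dmat_le_two (hP : ∀ x, ∑ y : S, P x y = 1) (hP0 : ∀ x y, 0 ≤ P x y) (t : ℕ) :
    Dmat P t ≤ 2 := by
  apply Dmat_le
  intro x x'
  calc ∑ y : S, |(P ^ t) x y - (P ^ t) x' y|
      ≤ ∑ y : S, ((P ^ t) x y + (P ^ t) x' y) := by
        apply Finset.sum_le_sum
        intro y _
        have h1 := powNonneg hP0 t x y
        have h2 := powNonneg hP0 t x' y
        rw [abs_sub_le_iff]; constructor <;> linarith
    _ = 2 := by rw [Finset.sum_add_distrib, powRow hP, powRow hP]; norm_num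

lemma contraction (hP0 : ∀ x y, 0 ≤ P x y) (t : ℕ) (f : S → ℝ) (hf : ∑ x : S, f x = 0) :
    ∑ y : S, |∑ x : S, f x * (P ^ t) x y| ≤ Dmat P t * (∑ x : S, |f x|) / 2 := by
  set A : S → S → ℝ := fun x y => (P ^ t) x y with hA
  set fp : S → ℝ := fun x => max (f x) 0 with hfp
  set fm : S → ℝ := fun x => max (-(f x)) 0 with hfm
  have hsplit : ∀ x, f x = fp x - fm x := by
    intro x; simp only [hfp, hfm]
    rcases le_total 0 (f x) with h | h
    · rw [max_eq_left h, max_eq_right (by linarith)]; ring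
    · rw [max_eq_right h, max_eq_left (by linarith)]; ring
  have habs : ∀ x, |f x| = fp x + fm x := by
    intro x; simp only [hfp, hfm]
    rcases le_total 0 (f x) with h | h
    · rw [abs_of_nonneg h, max_eq_left h, max_eq_right (by linarith)]; ring
    · rw [abs_of_nonpos h, max_eq_right h, max_eq_left (by linarith)]; ring
  have hfp0 : ∀ x, 0 ≤ fp x := fun x => le_max_right _ _
  have hfm0 : ∀ x, 0 ≤ fm x := fun x => le_max_right _ _
  obtain ⟨c, hc⟩ : ∃ c, ∑ x : S, fp x = c := ⟨_, rfl⟩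
  have hcm : ∑ x : S, fm x = c := by
    have h1 : ∑ x : S, (fp x - fm x) = 0 := by
      rw [show (0:ℝ) = ∑ x : S, f x from hf.symm]
      exact Finset.sum_congr rfl fun x _ => (hsplit x).symm
    rw [Finset.sum_sub_distrib, hc] at h1
    linarith
  have habsum : ∑ x : S, |f x| = 2 * c := by
    rw [Finset.sum_congr rfl fun x _ => habs x, Finset.sum_add_distrib, hc, hcm]; ring
  have hc0 : 0 ≤ c := hc ▸ Finset.sum_nonneg fun x _ => hfp0 x
  rcases eq_or_lt_of_le hc0 with h0 | hcpos
  · -- c = 0 : f ≡ 0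
    have hz : ∀ x ∈ (univ : Finset S), fp x = 0 :=
      (Finset.sum_eq_zero_iff_of_nonneg (fun x _ => hfp0 x)).mp (hc.trans h0.symm)
    have hzm : ∀ x ∈ (univ : Finset S), fm x = 0 :=
      (Finset.sum_eq_zero_iff_of_nonneg (fun x _ => hfm0 x)).mp (hcm.trans h0.symm)
    have hf0 : ∀ x, f x = 0 := fun x => by
      rw [hsplit x, hz x (mem_univ x), hzm x (mem_univ x)]; ring
    simp only [hf0, zero_mul, Finset.sum_const_zero, abs_zero]
    have hD := Dmat_nonneg (P := P) t
    have habs0 : (0:ℝ) ≤ ∑ x : S, |f x| := Finset.sum_nonneg fun x _ => abs_nonneg _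
    positivity
  · -- main case
    have hcne : c ≠ 0 := ne_of_gt hcpos
    have hterm : ∀ y x, ∑ x' : S, fp x * fm x' * (A x y - A x' y)
        = fp x * A x y * c - fp x * (∑ x' : S, fm x' * A x' y) := by
      intro y x
      rw [← hcm, Finset.mul_sum, Finset.mul_sum, ← Finset.sum_sub_distrib]
      exact Finset.sum_congr rfl fun x' _ => by ring
    have hkey : ∀ y, c * (∑ x : S, f x * A x y)
        = ∑ x : S, ∑ x' : S, fp x * fm x' * (A x y - A x' y) := by
      intro y
      calc c * ∑ x : S, f x * A x y
          = c * ((∑ x : S, fp x * A x y) - (∑ x : S, fm x * A x y)) := by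
            rw [← Finset.sum_sub_distrib]
            congr 1
            exact Finset.sum_congr rfl fun x _ => by rw [hsplit x]; ring
        _ = ∑ x : S, (fp x * A x y * c - fp x * (∑ x' : S, fm x' * A x' y)) := by
            rw [Finset.sum_sub_distrib, ← Finset.sum_mul, ← Finset.sum_mul, hc]
            ring
        _ = ∑ x : S, ∑ x' : S, fp x * fm x' * (A x y - A x' y) :=
            Finset.sum_congr rfl fun x _ => (hterm y x).symm
    have hbound : ∀ y, |∑ x : S, f x * A x y|
        ≤ (∑ x : S, ∑ x' : S, fp x * fm x' * |A x y - A x' y|) / c := by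
      intro y
      rw [le_div_iff₀ hcpos]
      calc |∑ x : S, f x * A x y| * c = |c * ∑ x : S, f x * A x y| := by
            rw [mul_comm, abs_mul, abs_of_pos hcpos]
        _ = |∑ x : S, ∑ x' : S, fp x * fm x' * (A x y - A x' y)| := by rw [hkey]
        _ ≤ ∑ x : S, |∑ x' : S, fp x * fm x' * (A x y - A x' y)| := Finset.abs_sum_le_sum_abs _ _
        _ ≤ ∑ x : S, ∑ x' : S, fp x * fm x' * |A x y - A x' y| := by
            apply Finset.sum_le_sum
            intro x _
            refine le_trans (Finset.abs_sum_le_sum_abs _ _) ?_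
            apply Finset.sum_le_sum
            intro x' _
            rw [abs_mul, abs_of_nonneg (mul_nonneg (hfp0 x) (hfm0 x'))]
    calc ∑ y : S, |∑ x : S, f x * A x y|
        ≤ ∑ y : S, (∑ x : S, ∑ x' : S, fp x * fm x' * |A x y - A x' y|) / c :=
          Finset.sum_le_sum fun y _ => hbound y
      _ = (∑ x : S, ∑ x' : S, fp x * fm x' * ∑ y : S, |A x y - A x' y|) / c := by
          rw [← Finset.sum_div]
          congr 1
          rw [Finset.sum_comm]
          apply Finset.sum_congr rfl
          intro x _
          rw [Finset.sum_comm]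
          apply Finset.sum_congr rfl
          intro x' _
          rw [Finset.mul_sum]
      _ ≤ (∑ x : S, ∑ x' : S, fp x * fm x' * Dmat P t) / c := by
          apply div_le_div_of_nonneg_right ?_ hc0
          exact Finset.sum_le_sum fun x _ => Finset.sum_le_sum fun x' _ =>
            mul_le_mul_of_nonneg_left (le_Dmat t x x') (mul_nonneg (hfp0 x) (hfm0 x'))
      _ = Dmat P t * (∑ x : S, |f x|) / 2 := by
          rw [habsum]
          have e1 : ∑ x : S, ∑ x' : S, fp x * fm x' * Dmat P t = c * c * Dmat P t := by
            calc ∑ x : S, ∑ x' : S, fp x * fm x' * Dmat P t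
                = (∑ x : S, fp x) * (∑ x' : S, fm x') * Dmat P t := by
                  rw [Finset.sum_mul_sum, Finset.sum_mul]
                  exact Finset.sum_congr rfl fun x _ => by rw [Finset.sum_mul]
              _ = c * c * Dmat P t := by rw [hc, hcm]
          rw [e1]
          field_simp

lemma Dmat_submul (hP0 : ∀ x y, 0 ≤ P x y) (hP1 : ∀ x, ∑ y : S, P x y = 1) (s t : ℕ) :
    Dmat P (s + t) ≤ Dmat P s * Dmat P t / 2 := by
  apply Dmat_le
  intro x x'
  have hf : ∑ z : S, ((P ^ s) x z - (P ^ s) x' z) = 0 := by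
    rw [Finset.sum_sub_distrib, powRow hP1, powRow hP1]; ring
  have hrw : ∀ y, (P ^ (s + t)) x y - (P ^ (s + t)) x' y
      = ∑ z : S, ((P ^ s) x z - (P ^ s) x' z) * (P ^ t) z y := by
    intro y
    rw [pow_add, Matrix.mul_apply, Matrix.mul_apply, ← Finset.sum_sub_distrib]
    exact Finset.sum_congr rfl fun z _ => by ring
  calc ∑ y : S, |(P ^ (s + t)) x y - (P ^ (s + t)) x' y|
      = ∑ y : S, |∑ z : S, ((P ^ s) x z - (P ^ s) x' z) * (P ^ t) z y| := by
        exact Finset.sum_congr rfl fun y _ => by rw [hrw y]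
    _ ≤ Dmat P t * (∑ z : S, |(P ^ s) x z - (P ^ s) x' z|) / 2 := contraction hP0 t _ hf
    _ ≤ Dmat P t * Dmat P s / 2 := by
        apply div_le_div_of_nonneg_right ?_ (by norm_num)
        exact mul_le_mul_of_nonneg_left (le_Dmat s x x') (Dmat_nonneg t)
    _ = Dmat P s * Dmat P t / 2 := by ring

lemma d_le_Dmat (hstat : ∀ y, ∑ x : S, π x * P x y = π y) (hπsum : ∑ y : S, π y = 1)
    (hπ0 : ∀ y, 0 ≤ π y)
    (d : ℕ → ℝ) (hd : ∀ t : ℕ, d t = ⨆ x : S, (1 / 2) * ∑ y : S, |(P ^ t) x y - π y|) (t : ℕ) :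
    d t ≤ Dmat P t / 2 := by
  rw [hd]
  apply ciSup_le
  intro x
  have key : ∑ y : S, |(P ^ t) x y - π y| ≤ Dmat P t := by
    calc ∑ y : S, |(P ^ t) x y - π y|
        = ∑ y : S, |∑ x' : S, π x' * ((P ^ t) x y - (P ^ t) x' y)| := by
          apply Finset.sum_congr rfl
          intro y _
          congr 1
          rw [Finset.sum_congr rfl (fun x' (_ : x' ∈ univ) => by ring :
            ∀ x' ∈ univ, π x' * ((P ^ t) x y - (P ^ t) x' y)
              = π x' * (P ^ t) x y - π x' * (P ^ t) x' y)]
          rw [Finset.sum_sub_distrib, ← Finset.sum_mul, hπsum, powStat hstat, one_mul]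
      _ ≤ ∑ y : S, ∑ x' : S, π x' * |(P ^ t) x y - (P ^ t) x' y| := by
          apply Finset.sum_le_sum
          intro y _
          refine le_trans (Finset.abs_sum_le_sum_abs _ _) ?_
          apply Finset.sum_le_sum
          intro x' _
          rw [abs_mul, abs_of_nonneg (hπ0 x')]
      _ = ∑ x' : S, π x' * ∑ y : S, |(P ^ t) x y - (P ^ t) x' y| := by
          rw [Finset.sum_comm]
          exact Finset.sum_congr rfl fun x' _ => by rw [Finset.mul_sum]
      _ ≤ ∑ x' : S, π x' * Dmat P t :=
          Finset.sum_le_sum fun x' _ =>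
            mul_le_mul_of_nonneg_left (le_Dmat t x x') (hπ0 x')
      _ = Dmat P t := by rw [← Finset.sum_mul, hπsum, one_mul]
  linarith

lemma Dmat_le_4d
    (d : ℕ → ℝ) (hd : ∀ t : ℕ, d t = ⨆ x : S, (1 / 2) * ∑ y : S, |(P ^ t) x y - π y|) (t : ℕ) :
    Dmat P t ≤ 4 * d t := by
  have hle : ∀ x : S, (1 / 2) * ∑ y : S, |(P ^ t) x y - π y| ≤ d t := by
    intro x
    rw [hd]
    exact le_ciSup (f := fun x : S => (1 / 2) * ∑ y : S, |(P ^ t) x y - π y|)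
      (Set.Finite.bddAbove (Set.finite_range _)) x
  apply Dmat_le
  intro x x'
  calc ∑ y : S, |(P ^ t) x y - (P ^ t) x' y|
      ≤ ∑ y : S, (|(P ^ t) x y - π y| + |(P ^ t) x' y - π y|) := by
        apply Finset.sum_le_sum
        intro y _
        have := abs_sub ((P ^ t) x y - π y) ((P ^ t) x' y - π y)
        calc |(P ^ t) x y - (P ^ t) x' y|
            = |((P ^ t) x y - π y) - ((P ^ t) x' y - π y)| := by congr 1; ring
          _ ≤ |(P ^ t) x y - π y| + |(P ^ t) x' y - π y| := abs_sub _ _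
    _ = (∑ y : S, |(P ^ t) x y - π y|) + ∑ y : S, |(P ^ t) x' y - π y| := Finset.sum_add_distrib
    _ ≤ 4 * d t := by
        have h1 := hle x
        have h2 := hle x'
        linarith

lemma Dmat_iter (hP0 : ∀ x y, 0 ≤ P x y) (hP1 : ∀ x, ∑ y : S, P x y = 1)
    (t : ℕ) {r : ℝ} (hr : Dmat P t ≤ 2 * r) (hr0 : 0 ≤ r) (k : ℕ) :
    Dmat P (k * t) ≤ 2 * r ^ k := by
  induction k with
  | zero => simpa using Dmat_le_two hP1 hP0 0
  | succ k ih =>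
    calc Dmat P ((k + 1) * t) = Dmat P (k * t + t) := by rw [Nat.succ_mul]
      _ ≤ Dmat P (k * t) * Dmat P t / 2 := Dmat_submul hP0 hP1 _ _
      _ ≤ (2 * r ^ k) * (2 * r) / 2 := by
          apply div_le_div_of_nonneg_right ?_ (by norm_num)
          exact mul_le_mul ih hr (Dmat_nonneg t) (by positivity)
      _ = 2 * r ^ (k + 1) := by rw [pow_succ]; ring

lemma exists_d_small (hP0 : ∀ x y, 0 ≤ P x y) (hP1 : ∀ x, ∑ y : S, P x y = 1)
    (haper : ∃ N : ℕ, ∀ n ≥ N, ∀ x y, 0 < (P ^ n) x y)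
    (hstat : ∀ y, ∑ x : S, π x * P x y = π y) (hπsum : ∑ y : S, π y = 1)
    (hπ0 : ∀ y, 0 ≤ π y)
    (d : ℕ → ℝ) (hd : ∀ t : ℕ, d t = ⨆ x : S, (1 / 2) * ∑ y : S, |(P ^ t) x y - π y|) :
    ∃ t : ℕ, d t ≤ 1 / 4 := by
  obtain ⟨N, hN⟩ := haper
  obtain ⟨p, -, hp⟩ := Finset.exists_min_image (univ : Finset (S × S))
    (fun p => (P ^ N) p.1 p.2) ⟨(Classical.arbitrary S, Classical.arbitrary S), mem_univ _⟩
  set ε : ℝ := (P ^ N) p.1 p.2 with hε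
  have hεpos : 0 < ε := hN N le_rfl p.1 p.2
  have hεle : ∀ x y : S, ε ≤ (P ^ N) x y := fun x y => hp (x, y) (mem_univ _)
  set r : ℝ := 1 - (Fintype.card S : ℝ) * ε with hrdef
  have hcard : (Fintype.card S : ℝ) * ε ≤ 1 := by
    obtain x := Classical.arbitrary S
    calc (Fintype.card S : ℝ) * ε = ∑ _y : S, ε := by
          rw [Finset.sum_const, card_univ, nsmul_eq_mul]
      _ ≤ ∑ y : S, (P ^ N) x y := Finset.sum_le_sum fun y _ => hεle x y
      _ = 1 := powRow hP1 N x
  have hr0 : 0 ≤ r := by rw [hrdef]; linarith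
  have hr1 : r < 1 := by
    rw [hrdef]
    have : 0 < (Fintype.card S : ℝ) * ε :=
      mul_pos (by exact_mod_cast Fintype.card_pos) hεpos
    linarith
  have hDN : Dmat P N ≤ 2 * r := by
    apply Dmat_le
    intro x x'
    calc ∑ y : S, |(P ^ N) x y - (P ^ N) x' y|
        ≤ ∑ y : S, ((P ^ N) x y + (P ^ N) x' y - 2 * ε) := by
          apply Finset.sum_le_sum
          intro y _
          have h1 := hεle x y
          have h2 := hεle x' y
          rw [abs_sub_le_iff]; constructor <;> linarith
      _ = 2 * r := by
          rw [Finset.sum_sub_distrib, Finset.sum_add_distrib, powRow hP1, powRow hP1,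
            Finset.sum_const, card_univ, nsmul_eq_mul, hrdef]
          ring
  obtain ⟨k, hk⟩ := exists_pow_lt_of_lt_one (by norm_num : (0:ℝ) < 1/4) hr1
  refine ⟨k * N, ?_⟩
  calc d (k * N) ≤ Dmat P (k * N) / 2 := d_le_Dmat hstat hπsum hπ0 d hd _
    _ ≤ (2 * r ^ k) / 2 := by
        apply div_le_div_of_nonneg_right (Dmat_iter hP0 hP1 N hDN hr0 k) (by norm_num)
    _ = r ^ k := by ring
    _ ≤ 1 / 4 := hk.le

lemma sep_bound (hP0 : ∀ x y, 0 ≤ P x y) (hP1 : ∀ x, ∑ y : S, P x y = 1)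
    (hπpos : ∀ y, 0 < π y) (hπsum : ∑ y : S, π y = 1)
    (hstat : ∀ y, ∑ x : S, π x * P x y = π y)
    (hrev : ∀ x y, π x * P x y = π y * P y x)
    (d : ℕ → ℝ) (hd : ∀ t : ℕ, d t = ⨆ x : S, (1 / 2) * ∑ y : S, |(P ^ t) x y - π y|)
    (x0 : S) {s : ℕ} {δ : ℝ} (hδ : d s ≤ δ) (hδ2 : 2 * δ ≤ 1) (y : S) :
    1 - (P ^ (2 * s)) x0 y / π y ≤ 4 * δ := by
  set a : S → ℝ := fun z => (P ^ s) x0 z with ha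
  set b : S → ℝ := fun z => (P ^ s) y z with hb
  set m : S → ℝ := fun z => min (a z) (b z) with hm
  have ha0 : ∀ z, 0 ≤ a z := fun z => powNonneg hP0 s x0 z
  have hb0 : ∀ z, 0 ≤ b z := fun z => powNonneg hP0 s y z
  have hm0 : ∀ z, 0 ≤ m z := fun z => le_min (ha0 z) (hb0 z)
  have h1 : ∑ z : S, |a z - b z| ≤ 4 * δ := by
    calc ∑ z : S, |a z - b z| ≤ Dmat P s := le_Dmat s x0 y
      _ ≤ 4 * d s := Dmat_le_4d d hd s
      _ ≤ 4 * δ := by linarith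
  have h2 : 1 - 2 * δ ≤ ∑ z : S, m z := by
    have hmz : ∀ z, m z = (a z + b z - |a z - b z|) / 2 := by
      intro z
      rcases le_total (a z) (b z) with h | h
      · rw [hm]; simp only; rw [min_eq_left h, abs_of_nonpos (by linarith)]; ring
      · rw [hm]; simp only; rw [min_eq_right h, abs_of_nonneg (by linarith)]; ring
    rw [Finset.sum_congr rfl fun z _ => hmz z]
    rw [← Finset.sum_div, Finset.sum_sub_distrib, Finset.sum_add_distrib]
    rw [show ∑ z : S, a z = 1 from powRow hP1 s x0, show ∑ z : S, b z = 1 from powRow hP1 s y]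
    linarith
  have h3 : (P ^ (2 * s)) x0 y / π y = ∑ z : S, a z * b z / π z := by
    have h2s : (P ^ (2 * s)) x0 y = ∑ z : S, a z * (P ^ s) z y := by
      rw [two_mul, pow_add, Matrix.mul_apply]
    have hzy : ∀ z, (P ^ s) z y = π y * b z / π z := by
      intro z
      rw [eq_div_iff (ne_of_gt (hπpos z))]
      have h := powRev hrev s z y
      show (P ^ s) z y * π z = π y * (P ^ s) y z
      linarith
    rw [h2s, Finset.sum_congr rfl fun z _ => by rw [hzy z], Finset.sum_div]
    apply Finset.sum_congr rfl
    intro z _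
    field_simp [(hπpos y).ne', (hπpos z).ne']
  have h4 : (∑ z : S, m z) ^ 2 ≤ ∑ z : S, a z * b z / π z := by
    have cs : (∑ z : S, m z) ^ 2 ≤ (∑ z : S, π z) * ∑ z : S, m z ^ 2 / π z := by
      apply sum_sq_le_sum_mul_sum_of_sq_eq_mul
      · exact fun z _ => (hπpos z).le
      · exact fun z _ => div_nonneg (sq_nonneg _) (hπpos z).le
      · intro z _
        field_simp [ne_of_gt (hπpos z)]
    rw [hπsum, one_mul] at cs
    refine cs.trans (Finset.sum_le_sum fun z _ => ?_)
    apply div_le_div_of_nonneg_right ?_ (hπpos z).le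
    calc m z ^ 2 = m z * m z := sq _
      _ ≤ a z * b z :=
        mul_le_mul (min_le_left _ _) (min_le_right _ _) (hm0 z) (ha0 z)
  have h5 : (1 - 2 * δ) ^ 2 ≤ (P ^ (2 * s)) x0 y / π y := by
    rw [h3]
    refine le_trans ?_ h4
    apply pow_le_pow_left₀ (by linarith) h2
  nlinarith [h5, sq_nonneg δ, sq_nonneg (1 - 2 * δ)]

end aux2

/-- **Tail bound for an optimal strong stationary time.**
Let `P` be the transition matrix of a reversible, irreducible and aperiodic Markov chain on a
finite state space `S` with stationary distribution `π > 0`.  Fix a state `x0` and let `η` be an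
`ℕ`-valued random variable with `P(η > t) = s_{x0}(t)` for all `t`, where
`s_x(t) = max_y (1 - Pᵗ(x,y)/π(y))` is the separation distance.  Then for every `ℓ ∈ ℕ`,
`P(η > ℓ·t_mix) ≤ 4·2^{-⌊ℓ/2⌋}`, where `t_mix = min{t : d(t) ≤ 1/4}` and
`d(t) = max_x (1/2)·Σ_y |Pᵗ(x,y) - π(y)|`. -/
theorem optimal_sst_tail_bound
    {S : Type*} [Fintype S] [DecidableEq S] [Nonempty S]
    {Ω : Type*} [MeasurableSpace Ω] (μ : Measure Ω) [IsProbabilityMeasure μ]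
    (P : Matrix S S ℝ) (π : S → ℝ)
    (hPnonneg : ∀ x y, 0 ≤ P x y) (hProw : ∀ x, ∑ y : S, P x y = 1)
    (hπpos : ∀ y, 0 < π y) (hπsum : ∑ y : S, π y = 1)
    (hstat : ∀ y, ∑ x : S, π x * P x y = π y)
    (hrev : ∀ x y, π x * P x y = π y * P y x)
    (hirr : ∀ x y, ∃ n : ℕ, 0 < (P ^ n) x y)
    (haper : ∃ N : ℕ, ∀ n ≥ N, ∀ x y, 0 < (P ^ n) x y)
    (x0 : S) (η : Ω → ℕ)
    (sep : ℕ → ℝ)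
    (hsep : ∀ t : ℕ, sep t = ⨆ y : S, (1 - (P ^ t) x0 y / π y))
    (hη : ∀ t : ℕ, (μ {ω | t < η ω}).toReal = sep t)
    (d : ℕ → ℝ)
    (hd : ∀ t : ℕ, d t = ⨆ x : S, (1 / 2) * ∑ y : S, |(P ^ t) x y - π y|)
    (tmix : ℕ) (htmix : tmix = sInf {t : ℕ | d t ≤ 1 / 4})
    (ℓ : ℕ) :
    (μ {ω | ℓ * tmix < η ω}).toReal ≤ 4 * (2 : ℝ) ^ (-((ℓ : ℤ) / 2)) := by
  have hπ0 : ∀ y, 0 ≤ π y := fun y => (hπpos y).le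
  set k := ℓ / 2 with hk
  have hcast : -((ℓ : ℤ) / 2) = -(k : ℤ) := by omega
  have hRHS : (4 : ℝ) * (2 : ℝ) ^ (-((ℓ : ℤ) / 2)) = 4 * (1/2 : ℝ) ^ k := by
    rw [hcast, zpow_neg, zpow_natCast, one_div, inv_pow]
  have hprob : ∀ s : Set Ω, (μ s).toReal ≤ 1 := fun s => by
    have := ENNReal.toReal_mono ENNReal.one_ne_top (prob_le_one (μ := μ) (s := s))
    simpa using this
  rcases Nat.eq_zero_or_pos k with hk0 | hkpos
  · rw [hRHS, hk0]
    calc (μ {ω | ℓ * tmix < η ω}).toReal ≤ 1 := hprob _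
      _ ≤ 4 * (1/2 : ℝ) ^ 0 := by norm_num
  · have h2k : 2 * k ≤ ℓ := by omega
    have hsub : {ω | ℓ * tmix < η ω} ⊆ {ω | 2 * (k * tmix) < η ω} := by
      intro ω h
      simp only [Set.mem_setOf_eq] at *
      have : 2 * (k * tmix) ≤ ℓ * tmix := by
        rw [← mul_assoc]; exact Nat.mul_le_mul_right _ h2k
      omega
    have hmono : (μ {ω | ℓ * tmix < η ω}).toReal ≤ (μ {ω | 2 * (k * tmix) < η ω}).toReal :=
      ENNReal.toReal_mono (measure_ne_top μ _) (measure_mono hsub)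
    have hset : ∃ t : ℕ, d t ≤ 1/4 :=
      exists_d_small hPnonneg hProw haper hstat hπsum hπ0 d hd
    have hdtmix : d tmix ≤ 1/4 := by
      have := Nat.sInf_mem (s := {t : ℕ | d t ≤ 1/4}) hset
      rw [htmix]; exact this
    have hDtmix : Dmat P tmix ≤ 2 * (1/2 : ℝ) := by
      have := Dmat_le_4d (π := π) d hd tmix
      linarith
    have hDk : Dmat P (k * tmix) ≤ 2 * (1/2 : ℝ) ^ k :=
      Dmat_iter hPnonneg hProw tmix hDtmix (by norm_num) k
    have hdk : d (k * tmix) ≤ (1/2 : ℝ) ^ k := by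
      have := d_le_Dmat hstat hπsum hπ0 d hd (k * tmix)
      linarith
    have hhalf : 2 * ((1/2 : ℝ) ^ k) ≤ 1 := by
      have : (1/2 : ℝ) ^ k ≤ (1/2 : ℝ) ^ 1 :=
        pow_le_pow_of_le_one (by norm_num) (by norm_num) hkpos
      norm_num at this
      linarith
    have hsepb : sep (2 * (k * tmix)) ≤ 4 * (1/2 : ℝ) ^ k := by
      rw [hsep]
      apply ciSup_le
      intro y
      exact sep_bound hPnonneg hProw hπpos hπsum hstat hrev d hd x0 hdk hhalf y
    rw [hRHS]
    calc (μ {ω | ℓ * tmix < η ω}).toReal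
        ≤ (μ {ω | 2 * (k * tmix) < η ω}).toReal := hmono
      _ = sep (2 * (k * tmix)) := hη _
      _ ≤ 4 * (1/2 : ℝ) ^ k := hsepb
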